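/- For every vector v ∈ ℝ^d, the solution satisfies m_0 ≤ ⟨x_i(t), v⟩ ≤ M_0 and m_0 ≤ ⟨y_j(t), v⟩ ≤ M_0, for all t ≥ −τ when i = 1,…,k and j = 1,…,h, and for all t ≥ 0 when i = k+1,…,N and j = h+1,…,M. -/

import Mathlib

open Real Set Filter Topology
open scoped BigOperators RealInnerProductSpace

noncomputable section

/-- `Λ` : the maximum of the sup-norms of the four (positive) influence functions. -/
def Lam {d : ℕ} (ψ ψs φ φs : EuclideanSpace ℝ (Fin d) → EuclideanSpace ℝ (Fin d) → ℝ) : ℝ :=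
  max
    (max (⨆ p : EuclideanSpace ℝ (Fin d) × EuclideanSpace ℝ (Fin d), ψ p.1 p.2)
         (⨆ p : EuclideanSpace ℝ (Fin d) × EuclideanSpace ℝ (Fin d), ψs p.1 p.2))
    (max (⨆ p : EuclideanSpace ℝ (Fin d) × EuclideanSpace ℝ (Fin d), φ p.1 p.2)
         (⨆ p : EuclideanSpace ℝ (Fin d) × EuclideanSpace ℝ (Fin d), φs p.1 p.2))

/-- An influence function is admissible when it is continuous, positive and bounded. -/
def Admissible {d : ℕ} (f : EuclideanSpace ℝ (Fin d) → EuclideanSpace ℝ (Fin d) → ℝ) : Prop :=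
  Continuous (fun p : EuclideanSpace ℝ (Fin d) × EuclideanSpace ℝ (Fin d) => f p.1 p.2) ∧
    (∀ z₁ z₂, 0 < f z₁ z₂) ∧
    BddAbove (Set.range fun p : EuclideanSpace ℝ (Fin d) × EuclideanSpace ℝ (Fin d) => f p.1 p.2)

/-- `(x, y)` is a global classical solution of the two-population delayed
Hegselmann–Krause system, with `k` (resp. `h`) leaders in the first (resp. second)
population and time delay `τ`. -/
structure IsSol {d N M : ℕ} (h k : ℕ) (τ : ℝ)
    (ψ ψs φ φs : EuclideanSpace ℝ (Fin d) → EuclideanSpace ℝ (Fin d) → ℝ)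
    (x : Fin N → ℝ → EuclideanSpace ℝ (Fin d))
    (y : Fin M → ℝ → EuclideanSpace ℝ (Fin d)) : Prop where
  contx : ∀ i, Continuous (x i)
  conty : ∀ j, Continuous (y j)
  odex_lead : ∀ i : Fin N, (i : ℕ) < k → ∀ t : ℝ, 0 < t →
    HasDerivAt (x i)
      ((∑ j ∈ Finset.univ.erase i,
          (ψ (x i t) (x j t) / ((N : ℝ) + h - 1)) • (x j t - x i t)) +
        ∑ j ∈ Finset.univ.filter (fun j : Fin M => (j : ℕ) < h),
          (φ (x i t) (y j (t - τ)) / ((N : ℝ) + h - 1)) • (y j (t - τ) - x i t)) t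
  odex_foll : ∀ i : Fin N, k ≤ (i : ℕ) → ∀ t : ℝ, 0 < t →
    HasDerivAt (x i)
      (∑ j ∈ Finset.univ.erase i,
          (ψ (x i t) (x j t) / ((N : ℝ) - 1)) • (x j t - x i t)) t
  odey_lead : ∀ i : Fin M, (i : ℕ) < h → ∀ t : ℝ, 0 < t →
    HasDerivAt (y i)
      ((∑ j ∈ Finset.univ.erase i,
          (ψs (y i t) (y j t) / ((M : ℝ) + k - 1)) • (y j t - y i t)) +
        ∑ j ∈ Finset.univ.filter (fun j : Fin N => (j : ℕ) < k),
          (φs (y i t) (x j (t - τ)) / ((M : ℝ) + k - 1)) • (x j (t - τ) - y i t)) t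
  odey_foll : ∀ i : Fin M, h ≤ (i : ℕ) → ∀ t : ℝ, 0 < t →
    HasDerivAt (y i)
      (∑ j ∈ Finset.univ.erase i,
          (ψs (y i t) (y j t) / ((M : ℝ) - 1)) • (y j t - y i t)) t

/-- `m_0` : the minimum of the projections on `v` of the initial data. -/
def mInit {d N M : ℕ} (h k : ℕ) (τ : ℝ) (v : EuclideanSpace ℝ (Fin d))
    (x : Fin N → ℝ → EuclideanSpace ℝ (Fin d))
    (y : Fin M → ℝ → EuclideanSpace ℝ (Fin d)) : ℝ :=
  min
    (min (⨅ p : {i : Fin N // (i : ℕ) < k} × (Icc (-τ) (0 : ℝ)), ⟪x p.1.1 (p.2 : ℝ), v⟫)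
         (⨅ i : {i : Fin N // k ≤ (i : ℕ)}, ⟪x i.1 0, v⟫))
    (min (⨅ p : {j : Fin M // (j : ℕ) < h} × (Icc (-τ) (0 : ℝ)), ⟪y p.1.1 (p.2 : ℝ), v⟫)
         (⨅ j : {j : Fin M // h ≤ (j : ℕ)}, ⟪y j.1 0, v⟫))

/-- `M_0` : the maximum of the projections on `v` of the initial data. -/
def MInit {d N M : ℕ} (h k : ℕ) (τ : ℝ) (v : EuclideanSpace ℝ (Fin d))
    (x : Fin N → ℝ → EuclideanSpace ℝ (Fin d))
    (y : Fin M → ℝ → EuclideanSpace ℝ (Fin d)) : ℝ :=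
  max
    (max (⨆ p : {i : Fin N // (i : ℕ) < k} × (Icc (-τ) (0 : ℝ)), ⟪x p.1.1 (p.2 : ℝ), v⟫)
         (⨆ i : {i : Fin N // k ≤ (i : ℕ)}, ⟪x i.1 0, v⟫))
    (max (⨆ p : {j : Fin M // (j : ℕ) < h} × (Icc (-τ) (0 : ℝ)), ⟪y p.1.1 (p.2 : ℝ), v⟫)
         (⨆ j : {j : Fin M // h ≤ (j : ℕ)}, ⟪y j.1 0, v⟫))

/-- `C_0` : the maximum of the norms of the initial data. -/
def Cinit {d N M : ℕ} (h k : ℕ) (τ : ℝ)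
    (x : Fin N → ℝ → EuclideanSpace ℝ (Fin d))
    (y : Fin M → ℝ → EuclideanSpace ℝ (Fin d)) : ℝ :=
  max
    (max (⨆ p : {i : Fin N // (i : ℕ) < k} × (Icc (-τ) (0 : ℝ)), ‖x p.1.1 (p.2 : ℝ)‖)
         (⨆ i : {i : Fin N // k ≤ (i : ℕ)}, ‖x i.1 0‖))
    (max (⨆ p : {j : Fin M // (j : ℕ) < h} × (Icc (-τ) (0 : ℝ)), ‖y p.1.1 (p.2 : ℝ)‖)
         (⨆ j : {j : Fin M // h ≤ (j : ℕ)}, ‖y j.1 0‖))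

/-- the minimum of an influence function on the ball of radius `C` (in each variable). -/
def minOnBall {d : ℕ} (C : ℝ)
    (f : EuclideanSpace ℝ (Fin d) → EuclideanSpace ℝ (Fin d) → ℝ) : ℝ :=
  ⨅ p : {z : EuclideanSpace ℝ (Fin d) × EuclideanSpace ℝ (Fin d) // ‖z.1‖ ≤ C ∧ ‖z.2‖ ≤ C},
    f p.1.1 p.1.2

/-- `Γ := min {ψ₀, ψ*₀, φ₀, φ*₀}`. -/
def Gam {d N M : ℕ} (h k : ℕ) (τ : ℝ)
    (ψ ψs φ φs : EuclideanSpace ℝ (Fin d) → EuclideanSpace ℝ (Fin d) → ℝ)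
    (x : Fin N → ℝ → EuclideanSpace ℝ (Fin d))
    (y : Fin M → ℝ → EuclideanSpace ℝ (Fin d)) : ℝ :=
  min (min (minOnBall (Cinit h k τ x y) ψ) (minOnBall (Cinit h k τ x y) ψs))
      (min (minOnBall (Cinit h k τ x y) φ) (minOnBall (Cinit h k τ x y) φs))

/-- `m_n` : minimum of the projections on `v` over the time mesh `I_n = [(6n-1)τ, 6nτ]`. -/
def mSeq {d N M : ℕ} (h k : ℕ) (τ : ℝ) (v : EuclideanSpace ℝ (Fin d))
    (x : Fin N → ℝ → EuclideanSpace ℝ (Fin d))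
    (y : Fin M → ℝ → EuclideanSpace ℝ (Fin d)) (n : ℕ) : ℝ :=
  min
    (min (⨅ p : {i : Fin N // (i : ℕ) < k} × (Icc ((6 * (n : ℝ) - 1) * τ) (6 * (n : ℝ) * τ)),
            ⟪x p.1.1 (p.2 : ℝ), v⟫)
         (⨅ i : {i : Fin N // k ≤ (i : ℕ)}, ⟪x i.1 (6 * (n : ℝ) * τ), v⟫))
    (min (⨅ p : {j : Fin M // (j : ℕ) < h} × (Icc ((6 * (n : ℝ) - 1) * τ) (6 * (n : ℝ) * τ)),
            ⟪y p.1.1 (p.2 : ℝ), v⟫)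
         (⨅ j : {j : Fin M // h ≤ (j : ℕ)}, ⟪y j.1 (6 * (n : ℝ) * τ), v⟫))

/-- `M_n` : maximum of the projections on `v` over the time mesh `I_n = [(6n-1)τ, 6nτ]`. -/
def MSeq {d N M : ℕ} (h k : ℕ) (τ : ℝ) (v : EuclideanSpace ℝ (Fin d))
    (x : Fin N → ℝ → EuclideanSpace ℝ (Fin d))
    (y : Fin M → ℝ → EuclideanSpace ℝ (Fin d)) (n : ℕ) : ℝ :=
  max
    (max (⨆ p : {i : Fin N // (i : ℕ) < k} × (Icc ((6 * (n : ℝ) - 1) * τ) (6 * (n : ℝ) * τ)),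
            ⟪x p.1.1 (p.2 : ℝ), v⟫)
         (⨆ i : {i : Fin N // k ≤ (i : ℕ)}, ⟪x i.1 (6 * (n : ℝ) * τ), v⟫))
    (max (⨆ p : {j : Fin M // (j : ℕ) < h} × (Icc ((6 * (n : ℝ) - 1) * τ) (6 * (n : ℝ) * τ)),
            ⟪y p.1.1 (p.2 : ℝ), v⟫)
         (⨆ j : {j : Fin M // h ≤ (j : ℕ)}, ⟪y j.1 (6 * (n : ℝ) * τ), v⟫))


-- helper: bddAbove/bddBelow for compact-parameter families
lemma bddAbove_fam {d n : ℕ} (P : Fin n → Prop) (a c : ℝ)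
    (x : Fin n → ℝ → EuclideanSpace ℝ (Fin d)) (hx : ∀ i, Continuous (x i))
    (v : EuclideanSpace ℝ (Fin d)) :
    BddAbove (Set.range fun p : {i : Fin n // P i} × (Icc a c) => ⟪x p.1.1 (p.2 : ℝ), v⟫) := by
  have hsub : (Set.range fun p : {i : Fin n // P i} × (Icc a c) => ⟪x p.1.1 (p.2 : ℝ), v⟫)
      ⊆ ⋃ i : Fin n, (fun s => ⟪x i s, v⟫) '' Icc a c := by
    rintro _ ⟨p, rfl⟩
    exact Set.mem_iUnion.2 ⟨p.1.1, ⟨p.2, p.2.2, rfl⟩⟩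
  refine BddAbove.mono hsub ?_
  rw [← Set.biUnion_univ]
  rw [(Set.finite_univ (α := Fin n)).bddAbove_biUnion]
  intro i _
  exact (isCompact_Icc.image_of_continuousOn
    (Continuous.inner (hx i) continuous_const).continuousOn).bddAbove

lemma bddBelow_fam {d n : ℕ} (P : Fin n → Prop) (a c : ℝ)
    (x : Fin n → ℝ → EuclideanSpace ℝ (Fin d)) (hx : ∀ i, Continuous (x i))
    (v : EuclideanSpace ℝ (Fin d)) :
    BddBelow (Set.range fun p : {i : Fin n // P i} × (Icc a c) => ⟪x p.1.1 (p.2 : ℝ), v⟫) := by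
  have hsub : (Set.range fun p : {i : Fin n // P i} × (Icc a c) => ⟪x p.1.1 (p.2 : ℝ), v⟫)
      ⊆ ⋃ i : Fin n, (fun s => ⟪x i s, v⟫) '' Icc a c := by
    rintro _ ⟨p, rfl⟩
    exact Set.mem_iUnion.2 ⟨p.1.1, ⟨p.2, p.2.2, rfl⟩⟩
  refine BddBelow.mono hsub ?_
  rw [← Set.biUnion_univ]
  rw [(Set.finite_univ (α := Fin n)).bddBelow_biUnion]
  intro i _
  exact (isCompact_Icc.image_of_continuousOn
    (Continuous.inner (hx i) continuous_const).continuousOn).bddBelow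

lemma ciInf_le_neg_ciSup_neg {ι : Sort*} [Nonempty ι] (f g : ι → ℝ) (hfg : ∀ i, g i = -f i)
    (hb : BddBelow (Set.range f)) : ⨅ i, f i ≤ -⨆ i, g i := by
  rw [le_neg]
  refine ciSup_le fun i => ?_
  rw [hfg i, neg_le_neg_iff]
  exact ciInf_le hb i

lemma inner_sum_nonpos {d : ℕ} {ι : Type*} (s : Finset ι) (c : ι → ℝ)
    (w : ι → EuclideanSpace ℝ (Fin d)) (z v : EuclideanSpace ℝ (Fin d)) (q : ℝ)
    (hz : ⟪z, v⟫ = q) (hc : ∀ j ∈ s, 0 ≤ c j) (hw : ∀ j ∈ s, ⟪w j, v⟫ ≤ q) :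
    ⟪∑ j ∈ s, c j • (w j - z), v⟫ ≤ 0 := by
  rw [sum_inner]
  refine Finset.sum_nonpos fun j hj => ?_
  rw [real_inner_smul_left, inner_sub_left, hz]
  have h1 := hc j hj
  have h2 := hw j hj
  nlinarith

lemma upper_bound
    (d N M h k : ℕ) (hN : 2 ≤ N) (hM2 : 2 ≤ M)
    (hh1 : 1 ≤ h) (hhM : h < M) (hk1 : 1 ≤ k) (hkN : k < N)
    (τ : ℝ) (hτ : 0 < τ)
    (ψ ψs φ φs : EuclideanSpace ℝ (Fin d) → EuclideanSpace ℝ (Fin d) → ℝ)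
    (hψ : Admissible ψ) (hψs : Admissible ψs) (hφ : Admissible φ) (hφs : Admissible φs)
    (x : Fin N → ℝ → EuclideanSpace ℝ (Fin d)) (y : Fin M → ℝ → EuclideanSpace ℝ (Fin d))
    (hsol : IsSol h k τ ψ ψs φ φs x y) (v : EuclideanSpace ℝ (Fin d)) :
    (∀ i : Fin N, (i : ℕ) < k → ∀ t : ℝ, -τ ≤ t → ⟪x i t, v⟫ ≤ MInit h k τ v x y) ∧
    (∀ i : Fin N, k ≤ (i : ℕ) → ∀ t : ℝ, 0 ≤ t → ⟪x i t, v⟫ ≤ MInit h k τ v x y) ∧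
    (∀ j : Fin M, (j : ℕ) < h → ∀ t : ℝ, -τ ≤ t → ⟪y j t, v⟫ ≤ MInit h k τ v x y) ∧
    (∀ j : Fin M, h ≤ (j : ℕ) → ∀ t : ℝ, 0 ≤ t → ⟪y j t, v⟫ ≤ MInit h k τ v x y) := by
  set B := MInit h k τ v x y with hBdef
  haveI : Nonempty {i : Fin N // k ≤ (i : ℕ)} :=
    ⟨⟨⟨k, hkN⟩, by simp⟩⟩
  haveI : Nonempty {j : Fin M // h ≤ (j : ℕ)} :=
    ⟨⟨⟨h, hhM⟩, by simp⟩⟩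
  -- initial-data upper bounds
  have hxl0 : ∀ i : Fin N, (i : ℕ) < k → ∀ s ∈ Icc (-τ) (0 : ℝ), ⟪x i s, v⟫ ≤ B := by
    intro i hi s hs
    refine le_trans ?_ (le_trans (le_max_left _ _) (le_max_left _ _))
    exact le_ciSup (bddAbove_fam (fun i : Fin N => (i : ℕ) < k) (-τ) 0 x hsol.contx v)
      (⟨⟨i, hi⟩, ⟨s, hs⟩⟩ : {i : Fin N // (i : ℕ) < k} × (Icc (-τ) (0 : ℝ)))
  have hxf0 : ∀ i : Fin N, k ≤ (i : ℕ) → ⟪x i 0, v⟫ ≤ B := by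
    intro i hi
    refine le_trans ?_ (le_trans (le_max_right _ _) (le_max_left _ _))
    exact le_ciSup (f := fun i : {i : Fin N // k ≤ (i : ℕ)} => ⟪x i.1 0, v⟫)
      (Set.finite_range _).bddAbove ⟨i, hi⟩
  have hyl0 : ∀ j : Fin M, (j : ℕ) < h → ∀ s ∈ Icc (-τ) (0 : ℝ), ⟪y j s, v⟫ ≤ B := by
    intro j hj s hs
    refine le_trans ?_ (le_trans (le_max_left _ _) (le_max_right _ _))
    exact le_ciSup (bddAbove_fam (fun j : Fin M => (j : ℕ) < h) (-τ) 0 y hsol.conty v)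
      (⟨⟨j, hj⟩, ⟨s, hs⟩⟩ : {j : Fin M // (j : ℕ) < h} × (Icc (-τ) (0 : ℝ)))
  have hyf0 : ∀ j : Fin M, h ≤ (j : ℕ) → ⟪y j 0, v⟫ ≤ B := by
    intro j hj
    refine le_trans ?_ (le_trans (le_max_right _ _) (le_max_right _ _))
    exact le_ciSup (f := fun j : {j : Fin M // h ≤ (j : ℕ)} => ⟪y j.1 0, v⟫)
      (Set.finite_range _).bddAbove ⟨j, hj⟩
  have hx0 : ∀ i : Fin N, ⟪x i 0, v⟫ ≤ B := by
    intro i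
    rcases lt_or_ge (i : ℕ) k with hi | hi
    · exact hxl0 i hi 0 ⟨by linarith, le_refl 0⟩
    · exact hxf0 i hi
  have hy0 : ∀ j : Fin M, ⟪y j 0, v⟫ ≤ B := by
    intro j
    rcases lt_or_ge (j : ℕ) h with hj | hj
    · exact hyl0 j hj 0 ⟨by linarith, le_refl 0⟩
    · exact hyf0 j hj
  have hNc : (2 : ℝ) ≤ N := by exact_mod_cast hN
  have hMc : (2 : ℝ) ≤ M := by exact_mod_cast hM2
  have hhc : (1 : ℝ) ≤ h := by exact_mod_cast hh1
  have hkc : (1 : ℝ) ≤ k := by exact_mod_cast hk1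
  have d1 : 0 < (N : ℝ) + h - 1 := by linarith
  have d2 : 0 < (N : ℝ) - 1 := by linarith
  have d3 : 0 < (M : ℝ) + k - 1 := by linarith
  have d4 : 0 < (M : ℝ) - 1 := by linarith
  have hfxcont : ∀ i : Fin N, Continuous fun t => ⟪x i t, v⟫ :=
    fun i => (hsol.contx i).inner continuous_const
  have hfycont : ∀ j : Fin M, Continuous fun t => ⟪y j t, v⟫ :=
    fun j => (hsol.conty j).inner continuous_const
  -- key barrier estimate
  have key : ∀ ε : ℝ, 0 < ε → ∀ t : ℝ, 0 ≤ t →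
      (∀ i : Fin N, ⟪x i t, v⟫ < B + ε * Real.exp t) ∧
      (∀ j : Fin M, ⟪y j t, v⟫ < B + ε * Real.exp t) := by
    intro ε hε
    set b : ℝ → ℝ := fun t => B + ε * Real.exp t with hbdef
    have hbcont : Continuous b := continuous_const.add (continuous_const.mul Real.continuous_exp)
    have hbmono : Monotone b := by
      intro s t hst
      have := Real.exp_le_exp.2 hst
      simp only [hbdef]
      nlinarith
    have hBlt : ∀ t, B < b t := by
      intro t
      have := Real.exp_pos t
      simp only [hbdef]
      nlinarith
    set S : Set ℝ := Ici (0 : ℝ) ∩ ((⋃ i : Fin N, {t | b t ≤ ⟪x i t, v⟫}) ∪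
      ⋃ j : Fin M, {t | b t ≤ ⟪y j t, v⟫}) with hSdef
    have hSmem : ∀ t, t ∈ S ↔ (0 ≤ t ∧ ((∃ i : Fin N, b t ≤ ⟪x i t, v⟫) ∨
        ∃ j : Fin M, b t ≤ ⟪y j t, v⟫)) := by
      intro t
      simp [hSdef, Set.mem_iUnion]
    suffices hSempty : S = ∅ by
      intro t ht
      constructor
      · intro i
        by_contra hle
        push_neg at hle
        have : t ∈ S := (hSmem t).2 ⟨ht, Or.inl ⟨i, hle⟩⟩
        simp [hSempty] at this
      · intro j
        by_contra hle
        push_neg at hle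
        have : t ∈ S := (hSmem t).2 ⟨ht, Or.inr ⟨j, hle⟩⟩
        simp [hSempty] at this
    by_contra hSne
    have hSne' : S.Nonempty := Set.nonempty_iff_ne_empty.2 hSne
    have hSclosed : IsClosed S :=
      isClosed_Ici.inter
        ((isClosed_iUnion_of_finite fun i => isClosed_le hbcont (hfxcont i)).union
          (isClosed_iUnion_of_finite fun j => isClosed_le hbcont (hfycont j)))
    have hSbdd : BddBelow S := ⟨0, fun t ht => ((hSmem t).1 ht).1⟩
    set t0 := sInf S with ht0def
    have ht0S : t0 ∈ S := hSclosed.csInf_mem hSne' hSbdd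
    have ht0nn : 0 ≤ t0 := ((hSmem t0).1 ht0S).1
    have ht0pos : 0 < t0 := by
      rcases ht0nn.lt_or_eq with hp | hp
      · exact hp
      exfalso
      rcases ((hSmem 0).1 (hp ▸ ht0S)).2 with ⟨i, hi⟩ | ⟨j, hj⟩
      · exact absurd hi (not_le.2 (lt_of_le_of_lt (hx0 i) (hBlt 0)))
      · exact absurd hj (not_le.2 (lt_of_le_of_lt (hy0 j) (hBlt 0)))
    have hbefore : ∀ s, 0 ≤ s → s < t0 →
        (∀ i : Fin N, ⟪x i s, v⟫ < b s) ∧ (∀ j : Fin M, ⟪y j s, v⟫ < b s) := by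
      intro s hs hst
      have hns : s ∉ S := notMem_of_lt_csInf hst hSbdd
      rw [hSmem] at hns
      push_neg at hns
      exact hns hs
    have hatt0 : ∀ f : ℝ → ℝ, Continuous f → (∀ s, 0 ≤ s → s < t0 → f s < b s) → f t0 ≤ b t0 := by
      intro f hf hlt
      refine le_of_tendsto_of_tendsto (hf.continuousAt.tendsto.mono_left nhdsWithin_le_nhds)
        (hbcont.continuousAt.tendsto.mono_left (nhdsWithin_le_nhds (s := Iio t0))) ?_
      filter_upwards [Ioo_mem_nhdsLT_of_mem
        (show t0 ∈ Ioc 0 t0 from ⟨ht0pos, le_refl _⟩)] with s hs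
      exact (hlt s hs.1.le hs.2).le
    have hxt0 : ∀ i : Fin N, ⟪x i t0, v⟫ ≤ b t0 :=
      fun i => hatt0 _ (hfxcont i) (fun s hs hst => (hbefore s hs hst).1 i)
    have hyt0 : ∀ j : Fin M, ⟪y j t0, v⟫ ≤ b t0 :=
      fun j => hatt0 _ (hfycont j) (fun s hs hst => (hbefore s hs hst).2 j)
    have hdelayy : ∀ j : Fin M, (j : ℕ) < h → ⟪y j (t0 - τ), v⟫ ≤ b t0 := by
      intro j hj
      rcases le_or_gt 0 (t0 - τ) with hs | hs
      · exact le_trans ((hbefore _ hs (by linarith)).2 j).le (hbmono (by linarith))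
      · exact le_trans (hyl0 j hj _ ⟨by linarith, hs.le⟩) (hBlt t0).le
    have hdelayx : ∀ j : Fin N, (j : ℕ) < k → ⟪x j (t0 - τ), v⟫ ≤ b t0 := by
      intro j hj
      rcases le_or_gt 0 (t0 - τ) with hs | hs
      · exact le_trans ((hbefore _ hs (by linarith)).1 j).le (hbmono (by linarith))
      · exact le_trans (hxl0 j hj _ ⟨by linarith, hs.le⟩) (hBlt t0).le
    have hderiv_contra : ∀ (f : ℝ → ℝ) (D : ℝ), HasDerivAt f D t0 →
        (∀ s, 0 ≤ s → s < t0 → f s < b s) → f t0 = b t0 → D ≤ 0 → False := by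
      intro f D hD hlt heq hDle
      have hb' : HasDerivAt b (ε * Real.exp t0) t0 := by
        simpa [hbdef] using ((Real.hasDerivAt_exp t0).const_mul ε).const_add B
      have hg : HasDerivAt (fun s => f s - b s) (D - ε * Real.exp t0) t0 := hD.sub hb'
      have hslope : Tendsto (slope (fun s => f s - b s) t0) (𝓝[<] t0)
          (𝓝 (D - ε * Real.exp t0)) :=
        (hasDerivAt_iff_tendsto_slope.1 hg).mono_left
          (nhdsWithin_mono _ fun s hs => ne_of_lt hs)
      have h0le : 0 ≤ D - ε * Real.exp t0 := by
        refine ge_of_tendsto hslope ?_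
        filter_upwards [Ioo_mem_nhdsLT_of_mem
          (show t0 ∈ Ioc 0 t0 from ⟨ht0pos, le_refl _⟩)] with s hs
        have h1 : f s - b s < 0 := sub_neg.2 (hlt s hs.1.le hs.2)
        have h2 : s - t0 < 0 := sub_neg.2 hs.2
        have hsl : slope (fun s => f s - b s) t0 s
            = ((f s - b s) - (f t0 - b t0)) / (s - t0) := slope_def_field _ _ _
        rw [hsl, heq, sub_self, sub_zero]
        have hq := div_nonneg (neg_nonneg.2 h1.le) (neg_nonneg.2 h2.le)
        rwa [neg_div_neg_eq] at hq
      nlinarith [Real.exp_pos t0]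
    rcases ((hSmem t0).1 ht0S).2 with ⟨i, hi⟩ | ⟨j, hj⟩
    · have heq : ⟪x i t0, v⟫ = b t0 := le_antisymm (hxt0 i) hi
      rcases lt_or_ge (i : ℕ) k with hik | hik
      · have hode := hsol.odex_lead i hik t0 ht0pos
        have hD := HasDerivAt.inner ℝ hode (hasDerivAt_const t0 v)
        simp only [inner_zero_right, zero_add] at hD
        refine hderiv_contra _ _ hD (fun s hs hst => (hbefore s hs hst).1 i) heq ?_
        rw [inner_add_left]
        have h1 := inner_sum_nonpos (Finset.univ.erase i)
          (fun j => ψ (x i t0) (x j t0) / ((N : ℝ) + h - 1))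
          (fun j => x j t0) (x i t0) v (b t0) heq
          (fun j _ => div_nonneg (hψ.2.1 _ _).le d1.le)
          (fun j _ => hxt0 j)
        have h2 := inner_sum_nonpos (Finset.univ.filter (fun j : Fin M => (j : ℕ) < h))
          (fun j => φ (x i t0) (y j (t0 - τ)) / ((N : ℝ) + h - 1))
          (fun j => y j (t0 - τ)) (x i t0) v (b t0) heq
          (fun j _ => div_nonneg (hφ.2.1 _ _).le d1.le)
          (fun j hjm => hdelayy j (Finset.mem_filter.1 hjm).2)
        linarith
      · have hode := hsol.odex_foll i hik t0 ht0pos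
        have hD := HasDerivAt.inner ℝ hode (hasDerivAt_const t0 v)
        simp only [inner_zero_right, zero_add] at hD
        refine hderiv_contra _ _ hD (fun s hs hst => (hbefore s hs hst).1 i) heq ?_
        exact inner_sum_nonpos (Finset.univ.erase i)
          (fun j => ψ (x i t0) (x j t0) / ((N : ℝ) - 1))
          (fun j => x j t0) (x i t0) v (b t0) heq
          (fun j _ => div_nonneg (hψ.2.1 _ _).le d2.le)
          (fun j _ => hxt0 j)
    · have heq : ⟪y j t0, v⟫ = b t0 := le_antisymm (hyt0 j) hj
      rcases lt_or_ge (j : ℕ) h with hjh | hjh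
      · have hode := hsol.odey_lead j hjh t0 ht0pos
        have hD := HasDerivAt.inner ℝ hode (hasDerivAt_const t0 v)
        simp only [inner_zero_right, zero_add] at hD
        refine hderiv_contra _ _ hD (fun s hs hst => (hbefore s hs hst).2 j) heq ?_
        rw [inner_add_left]
        have h1 := inner_sum_nonpos (Finset.univ.erase j)
          (fun l => ψs (y j t0) (y l t0) / ((M : ℝ) + k - 1))
          (fun l => y l t0) (y j t0) v (b t0) heq
          (fun l _ => div_nonneg (hψs.2.1 _ _).le d3.le)
          (fun l _ => hyt0 l)
        have h2 := inner_sum_nonpos (Finset.univ.filter (fun l : Fin N => (l : ℕ) < k))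
          (fun l => φs (y j t0) (x l (t0 - τ)) / ((M : ℝ) + k - 1))
          (fun l => x l (t0 - τ)) (y j t0) v (b t0) heq
          (fun l _ => div_nonneg (hφs.2.1 _ _).le d3.le)
          (fun l hlm => hdelayx l (Finset.mem_filter.1 hlm).2)
        linarith
      · have hode := hsol.odey_foll j hjh t0 ht0pos
        have hD := HasDerivAt.inner ℝ hode (hasDerivAt_const t0 v)
        simp only [inner_zero_right, zero_add] at hD
        refine hderiv_contra _ _ hD (fun s hs hst => (hbefore s hs hst).2 j) heq ?_
        exact inner_sum_nonpos (Finset.univ.erase j)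
          (fun l => ψs (y j t0) (y l t0) / ((M : ℝ) - 1))
          (fun l => y l t0) (y j t0) v (b t0) heq
          (fun l _ => div_nonneg (hψs.2.1 _ _).le d4.le)
          (fun l _ => hyt0 l)
  -- pass to the limit ε → 0
  have hub : ∀ t : ℝ, 0 ≤ t →
      (∀ i : Fin N, ⟪x i t, v⟫ ≤ B) ∧ (∀ j : Fin M, ⟪y j t, v⟫ ≤ B) := by
    intro t ht
    constructor
    · intro i
      by_contra hlt
      push_neg at hlt
      have hε : 0 < (⟪x i t, v⟫ - B) / Real.exp t :=
        div_pos (by linarith) (Real.exp_pos t)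
      have hk2 := (key _ hε t ht).1 i
      rw [div_mul_cancel₀ _ (Real.exp_pos t).ne'] at hk2
      linarith
    · intro j
      by_contra hlt
      push_neg at hlt
      have hε : 0 < (⟪y j t, v⟫ - B) / Real.exp t :=
        div_pos (by linarith) (Real.exp_pos t)
      have hk2 := (key _ hε t ht).2 j
      rw [div_mul_cancel₀ _ (Real.exp_pos t).ne'] at hk2
      linarith
  refine ⟨?_, ?_, ?_, ?_⟩
  · intro i hik t ht
    rcases le_or_gt t 0 with h0 | h0
    · exact hxl0 i hik t ⟨ht, h0⟩
    · exact (hub t h0.le).1 i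
  · intro i _ t ht
    exact (hub t ht).1 i
  · intro j hjh t ht
    rcases le_or_gt t 0 with h0 | h0
    · exact hyl0 j hjh t ⟨ht, h0⟩
    · exact (hub t h0.le).2 j
  · intro j _ t ht
    exact (hub t ht).2 j

lemma mInit_le_neg
    (d N M h k : ℕ) (hN : 2 ≤ N) (hM2 : 2 ≤ M)
    (hh1 : 1 ≤ h) (hhM : h < M) (hk1 : 1 ≤ k) (hkN : k < N)
    (τ : ℝ) (hτ : 0 < τ)
    (x : Fin N → ℝ → EuclideanSpace ℝ (Fin d)) (y : Fin M → ℝ → EuclideanSpace ℝ (Fin d))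
    (hcx : ∀ i, Continuous (x i)) (hcy : ∀ j, Continuous (y j))
    (v : EuclideanSpace ℝ (Fin d)) :
    mInit h k τ v x y ≤ -(MInit h k τ (-v) x y) := by
  haveI : Nonempty {i : Fin N // k ≤ (i : ℕ)} := ⟨⟨⟨k, hkN⟩, by simp⟩⟩
  haveI : Nonempty {j : Fin M // h ≤ (j : ℕ)} := ⟨⟨⟨h, hhM⟩, by simp⟩⟩
  haveI : Nonempty {i : Fin N // (i : ℕ) < k} :=
    ⟨⟨⟨0, by omega⟩, by simp; omega⟩⟩
  haveI : Nonempty {j : Fin M // (j : ℕ) < h} :=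
    ⟨⟨⟨0, by omega⟩, by simp; omega⟩⟩
  haveI : Nonempty (Icc (-τ) (0 : ℝ)) := ⟨⟨0, by constructor <;> linarith⟩⟩
  rw [mInit, MInit, ← min_neg_neg, ← min_neg_neg, ← min_neg_neg]
  refine min_le_min (min_le_min ?_ ?_) (min_le_min ?_ ?_)
  · exact ciInf_le_neg_ciSup_neg _ _ (fun p => inner_neg_right _ _)
      (bddBelow_fam (fun i : Fin N => (i : ℕ) < k) (-τ) 0 x hcx v)
  · exact ciInf_le_neg_ciSup_neg _ _ (fun p => inner_neg_right _ _)
      (Set.finite_range _).bddBelow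
  · exact ciInf_le_neg_ciSup_neg _ _ (fun p => inner_neg_right _ _)
      (bddBelow_fam (fun j : Fin M => (j : ℕ) < h) (-τ) 0 y hcy v)
  · exact ciInf_le_neg_ciSup_neg _ _ (fun p => inner_neg_right _ _)
      (Set.finite_range _).bddBelow

theorem stmt0
    (d N M h k : ℕ) (hd : 1 ≤ d) (hN : 2 ≤ N) (hM2 : 2 ≤ M) (hMN : M ≤ N)
    (hh1 : 1 ≤ h) (hhM : h < M) (hk1 : 1 ≤ k) (hkN : k < N)
    (τ : ℝ) (hτ : 0 < τ)
    (ψ ψs φ φs : EuclideanSpace ℝ (Fin d) → EuclideanSpace ℝ (Fin d) → ℝ)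
    (hψ : Admissible ψ) (hψs : Admissible ψs) (hφ : Admissible φ) (hφs : Admissible φs)
    (x : Fin N → ℝ → EuclideanSpace ℝ (Fin d)) (y : Fin M → ℝ → EuclideanSpace ℝ (Fin d))
    (hsol : IsSol h k τ ψ ψs φ φs x y)
    :
    ∀ v : EuclideanSpace ℝ (Fin d),
      (∀ i : Fin N, (i : ℕ) < k → ∀ t : ℝ, -τ ≤ t →
        mInit h k τ v x y ≤ ⟪x i t, v⟫ ∧ ⟪x i t, v⟫ ≤ MInit h k τ v x y) ∧
      (∀ i : Fin N, k ≤ (i : ℕ) → ∀ t : ℝ, 0 ≤ t →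
        mInit h k τ v x y ≤ ⟪x i t, v⟫ ∧ ⟪x i t, v⟫ ≤ MInit h k τ v x y) ∧
      (∀ j : Fin M, (j : ℕ) < h → ∀ t : ℝ, -τ ≤ t →
        mInit h k τ v x y ≤ ⟪y j t, v⟫ ∧ ⟪y j t, v⟫ ≤ MInit h k τ v x y) ∧
      (∀ j : Fin M, h ≤ (j : ℕ) → ∀ t : ℝ, 0 ≤ t →
        mInit h k τ v x y ≤ ⟪y j t, v⟫ ∧ ⟪y j t, v⟫ ≤ MInit h k τ v x y) := by
  intro v
  have hup := upper_bound d N M h k hN hM2 hh1 hhM hk1 hkN τ hτ ψ ψs φ φs hψ hψs hφ hφs x y hsol v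
  have hupn := upper_bound d N M h k hN hM2 hh1 hhM hk1 hkN τ hτ ψ ψs φ φs hψ hψs hφ hφs x y hsol (-v)
  have hmM := mInit_le_neg d N M h k hN hM2 hh1 hhM hk1 hkN τ hτ x y hsol.contx hsol.conty v
  refine ⟨?_, ?_, ?_, ?_⟩
  · intro i hik t ht
    refine ⟨?_, hup.1 i hik t ht⟩
    have h2 := hupn.1 i hik t ht
    rw [inner_neg_right] at h2
    linarith
  · intro i hik t ht
    refine ⟨?_, hup.2.1 i hik t ht⟩
    have h2 := hupn.2.1 i hik t ht
    rw [inner_neg_right] at h2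
    linarith
  · intro j hjh t ht
    refine ⟨?_, hup.2.2.1 j hjh t ht⟩
    have h2 := hupn.2.2.1 j hjh t ht
    rw [inner_neg_right] at h2
    linarith
  · intro j hjh t ht
    refine ⟨?_, hup.2.2.2 j hjh t ht⟩
    have h2 := hupn.2.2.2 j hjh t ht
    rw [inner_neg_right] at h2
    linarith
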